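/- Let q be a nonzero complex number, F the free unital ℂ-algebra on three generators x, y, θ, and I_q the two-sided ideal of F generated by xy - yx, xθ - qθx, yθ - qθy, θ². Then the family of images of the monomials x^m y^n θ^k, for m, n ∈ ℕ and k ∈ {0,1}, in the quotient algebra 𝒪(ℂ_q^{2|1}) = F/I_q is a basis of 𝒪(ℂ_q^{2|1}) as a ℂ-vector space (it is linearly independent and spans). -/

import Mathlib

/-- The defining relations (3.1) of the quantum superspace `ℂ_q^{2|1}`, on the free
algebra `ℂ⟨x, y, θ⟩` (with `0 ↦ x`, `1 ↦ y`, `2 ↦ θ`): `xy = yx`, `xθ = qθx`,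
`yθ = qθy`, `θ² = 0`. Quotienting by them yields the quotient of the free algebra
by the two-sided ideal generated by `xy - yx`, `xθ - qθx`, `yθ - qθy`, `θ²`. -/
inductive SuperspaceRel (q : ℂ) : FreeAlgebra ℂ (Fin 3) → FreeAlgebra ℂ (Fin 3) → Prop
  | xy : SuperspaceRel q (FreeAlgebra.ι ℂ 0 * FreeAlgebra.ι ℂ 1)
      (FreeAlgebra.ι ℂ 1 * FreeAlgebra.ι ℂ 0)
  | xθ : SuperspaceRel q (FreeAlgebra.ι ℂ 0 * FreeAlgebra.ι ℂ 2)
      (q • (FreeAlgebra.ι ℂ 2 * FreeAlgebra.ι ℂ 0))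
  | yθ : SuperspaceRel q (FreeAlgebra.ι ℂ 1 * FreeAlgebra.ι ℂ 2)
      (q • (FreeAlgebra.ι ℂ 2 * FreeAlgebra.ι ℂ 1))
  | θθ : SuperspaceRel q (FreeAlgebra.ι ℂ 2 * FreeAlgebra.ι ℂ 2) 0

/-- The algebra of polynomials `𝒪(ℂ_q^{2|1}) = ℂ⟨x,y,θ⟩/I_q`. -/
abbrev QuantumSuperspace (q : ℂ) := RingQuot (SuperspaceRel q)

noncomputable section QSAuxSec

namespace QSAux

abbrev QV : Type := (ℕ × ℕ × Fin 2) →₀ ℂ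

def Lx : QV →ₗ[ℂ] QV := Finsupp.lmapDomain ℂ ℂ (fun p => (p.1 + 1, p.2.1, p.2.2))
def Ly : QV →ₗ[ℂ] QV := Finsupp.lmapDomain ℂ ℂ (fun p => (p.1, p.2.1 + 1, p.2.2))
def Lt (q : ℂ) : QV →ₗ[ℂ] QV :=
  Finsupp.lsum ℂ (fun p => if p.2.2 = 0 then
    (q⁻¹ ^ (p.1 + p.2.1)) • Finsupp.lsingle (p.1, p.2.1, (1 : Fin 2)) else 0)

lemma Lx_single (p : ℕ × ℕ × Fin 2) (c : ℂ) :
    Lx (Finsupp.single p c) = Finsupp.single (p.1 + 1, p.2.1, p.2.2) c := by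
  simp [Lx, Finsupp.mapDomain_single]

lemma Ly_single (p : ℕ × ℕ × Fin 2) (c : ℂ) :
    Ly (Finsupp.single p c) = Finsupp.single (p.1, p.2.1 + 1, p.2.2) c := by
  simp [Ly, Finsupp.mapDomain_single]

lemma Lt_single0 (q : ℂ) (m n : ℕ) (c : ℂ) :
    Lt q (Finsupp.single (m, n, (0 : Fin 2)) c) =
      (q⁻¹ ^ (m + n)) • Finsupp.single (m, n, (1 : Fin 2)) c := by
  rw [Lt, Finsupp.lsum_single]
  simp

lemma Lt_single1 (q : ℂ) (m n : ℕ) (c : ℂ) :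
    Lt q (Finsupp.single (m, n, (1 : Fin 2)) c) = 0 := by
  rw [Lt, Finsupp.lsum_single]
  simp

lemma Lx_pow_single (m : ℕ) (p : ℕ × ℕ × Fin 2) (c : ℂ) :
    (Lx ^ m) (Finsupp.single p c) = Finsupp.single (p.1 + m, p.2.1, p.2.2) c := by
  induction m with
  | zero => simp
  | succ m ih =>
    rw [pow_succ', Module.End.mul_apply, ih, Lx_single]
    rfl

lemma Ly_pow_single (m : ℕ) (p : ℕ × ℕ × Fin 2) (c : ℂ) :
    (Ly ^ m) (Finsupp.single p c) = Finsupp.single (p.1, p.2.1 + m, p.2.2) c := by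
  induction m with
  | zero => simp
  | succ m ih =>
    rw [pow_succ', Module.End.mul_apply, ih, Ly_single]
    rfl

def G (q : ℂ) : Fin 3 → Module.End ℂ QV := ![Lx, Ly, Lt q]

def φ (q : ℂ) : FreeAlgebra ℂ (Fin 3) →ₐ[ℂ] Module.End ℂ QV :=
  FreeAlgebra.lift ℂ (G q)

lemma φ_ι0 (q : ℂ) : φ q (FreeAlgebra.ι ℂ 0) = Lx := by simp [φ, G]
lemma φ_ι1 (q : ℂ) : φ q (FreeAlgebra.ι ℂ 1) = Ly := by simp [φ, G]
lemma φ_ι2 (q : ℂ) : φ q (FreeAlgebra.ι ℂ 2) = Lt q := by simp [φ, G]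

lemma rel_holds {q : ℂ} (hq : q ≠ 0) ⦃a b : FreeAlgebra ℂ (Fin 3)⦄
    (h : SuperspaceRel q a b) : φ q a = φ q b := by
  induction h with
  | xy =>
    rw [map_mul, map_mul, φ_ι0, φ_ι1]
    refine Finsupp.lhom_ext fun p c => ?_
    obtain ⟨m, n, k⟩ := p
    rw [Module.End.mul_apply, Module.End.mul_apply, Lx_single, Ly_single,
      Lx_single, Ly_single]
  | xθ =>
    rw [map_mul, map_smul, map_mul, φ_ι0, φ_ι2]
    refine Finsupp.lhom_ext fun p c => ?_
    obtain ⟨m, n, k⟩ := p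
    rcases (show k = 0 ∨ k = 1 by omega) with rfl | rfl
    · rw [Module.End.mul_apply, LinearMap.smul_apply, Module.End.mul_apply,
        Lt_single0, map_smul, Lx_single, Lx_single, Lt_single0, smul_smul]
      show (q⁻¹ ^ (m + n)) • (Finsupp.single (m + 1, n, (1 : Fin 2)) c) =
        (q * q⁻¹ ^ (m + 1 + n)) • (Finsupp.single (m + 1, n, (1 : Fin 2)) c)
      congr 1
      rw [show m + 1 + n = (m + n) + 1 by omega, pow_succ',
        ← mul_assoc, mul_inv_cancel₀ hq, one_mul]
    · rw [Module.End.mul_apply, LinearMap.smul_apply, Module.End.mul_apply,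
        Lt_single1, map_zero, Lx_single, Lt_single1, smul_zero]
  | yθ =>
    rw [map_mul, map_smul, map_mul, φ_ι1, φ_ι2]
    refine Finsupp.lhom_ext fun p c => ?_
    obtain ⟨m, n, k⟩ := p
    rcases (show k = 0 ∨ k = 1 by omega) with rfl | rfl
    · rw [Module.End.mul_apply, LinearMap.smul_apply, Module.End.mul_apply,
        Lt_single0, map_smul, Ly_single, Ly_single, Lt_single0, smul_smul]
      show (q⁻¹ ^ (m + n)) • (Finsupp.single (m, n + 1, (1 : Fin 2)) c) =
        (q * q⁻¹ ^ (m + (n + 1))) • (Finsupp.single (m, n + 1, (1 : Fin 2)) c)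
      congr 1
      rw [show m + (n + 1) = (m + n) + 1 by omega, pow_succ',
        ← mul_assoc, mul_inv_cancel₀ hq, one_mul]
    · rw [Module.End.mul_apply, LinearMap.smul_apply, Module.End.mul_apply,
        Lt_single1, map_zero, Ly_single, Lt_single1, smul_zero]
  | θθ =>
    rw [map_mul, map_zero, φ_ι2]
    refine Finsupp.lhom_ext fun p c => ?_
    obtain ⟨m, n, k⟩ := p
    rcases (show k = 0 ∨ k = 1 by omega) with rfl | rfl
    · rw [Module.End.mul_apply, Lt_single0, map_smul, Lt_single1, smul_zero,
        LinearMap.zero_apply]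
    · rw [Module.End.mul_apply, Lt_single1, map_zero, LinearMap.zero_apply]

end QSAux

end QSAuxSec

/-- The PBW-type basis assertion: the images of the monomials `x^m y^n θ^k`,
`m, n ∈ ℕ`, `k ∈ {0,1}`, form a `ℂ`-vector space basis of `𝒪(ℂ_q^{2|1})`. -/
theorem monomials_basis_of_quantum_superspace (q : ℂ) (hq : q ≠ 0) :
    let mk : FreeAlgebra ℂ (Fin 3) →ₐ[ℂ] QuantumSuperspace q :=
      RingQuot.mkAlgHom ℂ (SuperspaceRel q)
    let b : ℕ × ℕ × Fin 2 → QuantumSuperspace q := fun p =>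
      mk (FreeAlgebra.ι ℂ 0) ^ p.1 * mk (FreeAlgebra.ι ℂ 1) ^ p.2.1 *
        mk (FreeAlgebra.ι ℂ 2) ^ (p.2.2 : ℕ)
    LinearIndependent ℂ b ∧ Submodule.span ℂ (Set.range b) = ⊤ := by
  intro mk b
  set X := mk (FreeAlgebra.ι ℂ 0) with hX
  set Y := mk (FreeAlgebra.ι ℂ 1) with hY
  set T := mk (FreeAlgebra.ι ℂ 2) with hT
  -- relations in the quotient
  have hxy : X * Y = Y * X := by
    have := RingQuot.mkAlgHom_rel ℂ (SuperspaceRel.xy (q := q))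
    simpa [map_mul] using this
  have hxt : X * T = q • (T * X) := by
    have := RingQuot.mkAlgHom_rel ℂ (SuperspaceRel.xθ (q := q))
    simpa [map_mul, map_smul] using this
  have hyt : Y * T = q • (T * Y) := by
    have := RingQuot.mkAlgHom_rel ℂ (SuperspaceRel.yθ (q := q))
    simpa [map_mul, map_smul] using this
  have htt : T * T = 0 := by
    have := RingQuot.mkAlgHom_rel ℂ (SuperspaceRel.θθ (q := q))
    simpa [map_mul] using this
  have htx : T * X = q⁻¹ • (X * T) := by
    rw [hxt, smul_smul, inv_mul_cancel₀ hq, one_smul]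
  have hty : T * Y = q⁻¹ • (Y * T) := by
    rw [hyt, smul_smul, inv_mul_cancel₀ hq, one_smul]
  have htxm : ∀ m : ℕ, T * X ^ m = (q⁻¹ ^ m) • (X ^ m * T) := by
    intro m
    induction m with
    | zero => simp
    | succ m ih =>
      rw [pow_succ, ← mul_assoc, ih, smul_mul_assoc, mul_assoc, htx,
        mul_smul_comm, smul_smul, ← pow_succ, ← mul_assoc]
  have htym : ∀ n : ℕ, T * Y ^ n = (q⁻¹ ^ n) • (Y ^ n * T) := by
    intro n
    induction n with
    | zero => simp
    | succ n ih =>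
      rw [pow_succ, ← mul_assoc, ih, smul_mul_assoc, mul_assoc, hty,
        mul_smul_comm, smul_smul, ← pow_succ, ← mul_assoc]
  have hcomm : ∀ m n : ℕ, Y ^ n * X ^ m = X ^ m * Y ^ n := fun m n =>
    ((Commute.pow_pow (hxy : Commute X Y) m n).symm).eq
  have htmono : ∀ a c : ℕ, T * (X ^ a * Y ^ c) =
      (q⁻¹ ^ (a + c)) • (X ^ a * Y ^ c * T) := by
    intro a c
    rw [← mul_assoc, htxm, smul_mul_assoc, mul_assoc, htym, mul_smul_comm,
      smul_smul, ← pow_add, mul_assoc]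
  have hmul0 : ∀ (m n m' n' : ℕ) (z : QuantumSuperspace q),
      (X ^ m * Y ^ n) * (X ^ m' * Y ^ n' * z) =
        X ^ (m + m') * Y ^ (n + n') * z := by
    intro m n m' n' z
    have hswap : ∀ w : QuantumSuperspace q,
        Y ^ n * (X ^ m' * w) = X ^ m' * (Y ^ n * w) := by
      intro w
      rw [← mul_assoc, hcomm, mul_assoc]
    simp only [mul_assoc, pow_add]
    rw [hswap]
  set S := Submodule.span ℂ (Set.range b) with hS
  have hbmem : ∀ p, b p ∈ S := fun p => Submodule.subset_span ⟨p, rfl⟩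
  have hb0 : ∀ m n : ℕ, b (m, n, 0) = X ^ m * Y ^ n := by
    intro m n; simp [b]; rfl
  have hb1 : ∀ m n : ℕ, b (m, n, 1) = X ^ m * Y ^ n * T := by
    intro m n; simp [b]; rfl
  have key : ∀ p p' : ℕ × ℕ × Fin 2, b p * b p' ∈ S := by
    rintro ⟨m, n, k⟩ ⟨m', n', k'⟩
    rcases (show k = 0 ∨ k = 1 by omega) with rfl | rfl
    · have : b (m, n, 0) * b (m', n', k') = b (m + m', n + n', k') := by
        show b (m, n, 0) * (X ^ m' * Y ^ n' * T ^ (k' : ℕ)) = _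
        rw [hb0, hmul0]
      rw [this]
      exact hbmem _
    · rcases (show k' = 0 ∨ k' = 1 by omega) with rfl | rfl
      · have : b (m, n, 1) * b (m', n', 0) =
            (q⁻¹ ^ (m' + n')) • b (m + m', n + n', 1) := by
          rw [hb1, hb0, mul_assoc, htmono, mul_smul_comm]
          congr 1
          rw [hb1, ← hmul0 m n m' n' T, mul_assoc]
        rw [this]
        exact Submodule.smul_mem _ _ (hbmem _)
      · have : b (m, n, 1) * b (m', n', 1) = 0 := by
          rw [hb1, hb1, mul_assoc]
          have h2 : T * (X ^ m' * Y ^ n' * T) = 0 := by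
            rw [← mul_assoc, htmono, smul_mul_assoc, mul_assoc, htt, mul_zero,
              smul_zero]
          rw [h2, mul_zero]
        rw [this]
        exact zero_mem _
  have hone : (1 : QuantumSuperspace q) ∈ S := by
    have h1 : b (0, 0, 0) = 1 := by simp [b]
    rw [← h1]; exact hbmem _
  have hmulS : ∀ v ∈ S, ∀ u ∈ S, u * v ∈ S := by
    intro v hv
    induction hv using Submodule.span_induction with
    | mem v hv =>
      obtain ⟨p', rfl⟩ := hv
      intro u hu
      induction hu using Submodule.span_induction with
      | mem u hu => obtain ⟨p, rfl⟩ := hu; exact key p p'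
      | zero => rw [zero_mul]; exact zero_mem _
      | add x y _ _ hx hy => rw [add_mul]; exact add_mem hx hy
      | smul a x _ hx => rw [smul_mul_assoc]; exact Submodule.smul_mem _ _ hx
    | zero => intro u hu; rw [mul_zero]; exact zero_mem _
    | add x y _ _ hx hy => intro u hu; rw [mul_add]; exact add_mem (hx u hu) (hy u hu)
    | smul a x _ hx => intro u hu; rw [mul_smul_comm]; exact Submodule.smul_mem _ _ (hx u hu)
  have hspan : S = ⊤ := by
    rw [eq_top_iff]
    rintro z -
    obtain ⟨w, rfl⟩ := RingQuot.mkAlgHom_surjective ℂ (SuperspaceRel q) z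
    induction w using FreeAlgebra.induction with
    | grade0 r =>
      rw [AlgHom.commutes, Algebra.algebraMap_eq_smul_one]
      exact Submodule.smul_mem _ _ hone
    | grade1 i =>
      fin_cases i
      · show X ∈ S
        have h1 : b (1, 0, 0) = X := by simp [b]; rfl
        rw [← h1]; exact hbmem _
      · show Y ∈ S
        have h1 : b (0, 1, 0) = Y := by simp [b]; rfl
        rw [← h1]; exact hbmem _
      · show T ∈ S
        have h1 : b (0, 0, 1) = T := by simp [b]; rfl
        rw [← h1]; exact hbmem _
    | mul a c ha hc => rw [map_mul]; exact hmulS _ hc _ ha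
    | add a c ha hc => rw [map_add]; exact add_mem ha hc
  refine ⟨?_, hspan⟩
  let ψ : QuantumSuperspace q →ₐ[ℂ] Module.End ℂ QSAux.QV :=
    RingQuot.liftAlgHom ℂ ⟨QSAux.φ q, QSAux.rel_holds hq⟩
  have hψmk : ∀ w, ψ (mk w) = QSAux.φ q w := fun w =>
    RingQuot.liftAlgHom_mkAlgHom_apply ℂ _ _ _
  let v0 : QSAux.QV := Finsupp.single (0, 0, (0 : Fin 2)) 1
  let L : QuantumSuperspace q →ₗ[ℂ] QSAux.QV :=
    (LinearMap.applyₗ v0).comp ψ.toLinearMap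
  have hLb : ∀ p, L (b p) = Finsupp.single p 1 := by
    rintro ⟨m, n, k⟩
    have hψX : ψ X = QSAux.Lx := by rw [hX, hψmk, QSAux.φ_ι0]
    have hψY : ψ Y = QSAux.Ly := by rw [hY, hψmk, QSAux.φ_ι1]
    have hψT : ψ T = QSAux.Lt q := by rw [hT, hψmk, QSAux.φ_ι2]
    show (ψ (X ^ m * Y ^ n * T ^ (k : ℕ))) v0 = _
    rw [map_mul, map_mul, map_pow, map_pow, map_pow, hψX, hψY, hψT]
    rcases (show k = 0 ∨ k = 1 by omega) with rfl | rfl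
    · simp only [Fin.val_zero, pow_zero, mul_one, Module.End.mul_apply]
      show (QSAux.Lx ^ m) ((QSAux.Ly ^ n) (Finsupp.single (0, 0, (0 : Fin 2)) 1)) = _
      rw [QSAux.Ly_pow_single, QSAux.Lx_pow_single]
      norm_num
    · simp only [Fin.val_one, pow_one, Module.End.mul_apply]
      show (QSAux.Lx ^ m) ((QSAux.Ly ^ n)
        ((QSAux.Lt q) (Finsupp.single (0, 0, (0 : Fin 2)) 1))) = _
      rw [QSAux.Lt_single0, map_smul, map_smul, QSAux.Ly_pow_single,
        QSAux.Lx_pow_single]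
      norm_num
  have hcL : ⇑L ∘ b = fun p => Finsupp.single p (1 : ℂ) := funext fun p => hLb p
  refine LinearIndependent.of_comp L ?_
  rw [hcL]
  have := (Finsupp.basisSingleOne (R := ℂ) (ι := ℕ × ℕ × Fin 2)).linearIndependent
  rwa [Finsupp.coe_basisSingleOne] at this
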